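/- Let F be an abelian group and A₁, A₂ finite subsets with |A₁| ≥ |A₂| ≥ (3/4)|A₁| and |A₁ + A₂| < (3/2)|A₁|. Let H be the stabilizer of A₁ + A₂, i.e., H = {x ∈ F : x + A₁ + A₂ = A₁ + A₂}. Then A₁ + A₂ is a coset of H, and each of A₁ and A₂ is contained in a coset of H. -/

import Mathlib

open Pointwise

section KneserAux

variable {F : Type*} [AddCommGroup F] [DecidableEq F]

private lemma interCard (X Y Z : Finset F) (hX : X ⊆ Z) (hY : Y ⊆ Z) :
    X.card + Y.card ≤ Z.card + (X ∩ Y).card := by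
  have h := Finset.card_union_add_card_inter X Y
  have h2 : (X ∪ Y).card ≤ Z.card := Finset.card_le_card (Finset.union_subset hX hY)
  omega

private lemma diff_subset_diff' (σ τ : Finset F) (h : (σ + τ).card + 1 ≤ 2 * τ.card) :
    σ - σ ⊆ τ - τ := by
  intro d hd
  obtain ⟨a, ha, a', ha', rfl⟩ := Finset.mem_sub.1 hd
  have hXsub : τ.image (fun v => a + v) ⊆ σ + τ := by
    intro z hz
    obtain ⟨v, hv, rfl⟩ := Finset.mem_image.1 hz
    exact Finset.add_mem_add ha hv
  have hX'sub : τ.image (fun v => a' + v) ⊆ σ + τ := by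
    intro z hz
    obtain ⟨v, hv, rfl⟩ := Finset.mem_image.1 hz
    exact Finset.add_mem_add ha' hv
  have h1 := interCard _ _ _ hXsub hX'sub
  rw [Finset.card_image_of_injective _ (add_right_injective a),
    Finset.card_image_of_injective _ (add_right_injective a')] at h1
  have h2 : 0 < (τ.image (fun v => a + v) ∩ τ.image (fun v => a' + v)).card := by omega
  obtain ⟨z, hz⟩ := Finset.card_pos.1 h2
  obtain ⟨hz1, hz2⟩ := Finset.mem_inter.1 hz
  obtain ⟨v, hv, hva⟩ := Finset.mem_image.1 hz1
  obtain ⟨v', hv', hva'⟩ := Finset.mem_image.1 hz2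
  have he : a - a' = v' - v := by
    have : a + v = a' + v' := by rw [hva, hva']
    rw [sub_eq_sub_iff_add_eq_add]
    rw [this]; abel
  rw [he]
  exact Finset.sub_mem_sub hv' hv

private lemma pop_bound (σ τ : Finset F) {d : F} (hd : d ∈ τ - τ) :
    2 * σ.card ≤ (σ ∩ σ.image (fun y => d + y)).card + (σ + τ).card := by
  obtain ⟨v, hv, v', hv', rfl⟩ := Finset.mem_sub.1 hd
  have hXsub : σ.image (fun u => v + u) ⊆ σ + τ := by
    intro z hz
    obtain ⟨u, hu, rfl⟩ := Finset.mem_image.1 hz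
    rw [add_comm v u]
    exact Finset.add_mem_add hu hv
  have hX'sub : σ.image (fun u => v' + u) ⊆ σ + τ := by
    intro z hz
    obtain ⟨u, hu, rfl⟩ := Finset.mem_image.1 hz
    rw [add_comm v' u]
    exact Finset.add_mem_add hu hv'
  have h1 := interCard _ _ _ hXsub hX'sub
  rw [Finset.card_image_of_injective _ (add_right_injective v),
    Finset.card_image_of_injective _ (add_right_injective v')] at h1
  have h2 : (σ.image (fun u => v + u) ∩ σ.image (fun u => v' + u)).card ≤
      (σ ∩ σ.image (fun y => v - v' + y)).card := by
    apply Finset.card_le_card_of_injOn (fun z => z - v')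
    · intro z hz
      obtain ⟨hz1, hz2⟩ := Finset.mem_inter.1 hz
      obtain ⟨u, hu, huz⟩ := Finset.mem_image.1 hz1
      obtain ⟨u', hu', hu'z⟩ := Finset.mem_image.1 hz2
      refine Finset.mem_inter.2 ⟨?_, ?_⟩
      · have : z - v' = u' := by rw [← hu'z]; abel
        beta_reduce; rw [this]; exact hu'
      · refine Finset.mem_image.2 ⟨u, hu, ?_⟩
        beta_reduce; rw [← huz]; abel
    · intro z _ z' _ hzz
      exact sub_left_injective hzz
  omega

private lemma sub_closed' (σ τ : Finset F)
    (h32 : 2 * (σ + τ).card + 1 ≤ 3 * σ.card) (hστ : σ - σ ⊆ τ - τ) :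
    ∀ d ∈ σ - σ, ∀ d' ∈ σ - σ, d - d' ∈ σ - σ := by
  intro d hd d' hd'
  have h1 := pop_bound σ τ (hστ hd)
  have h2 := pop_bound σ τ (hστ hd')
  have h3 := interCard (σ ∩ σ.image (fun y => d + y)) (σ ∩ σ.image (fun y => d' + y)) σ
    Finset.inter_subset_left Finset.inter_subset_left
  obtain ⟨a, ha⟩ := Finset.card_pos.1
    (show 0 < ((σ ∩ σ.image fun y => d + y) ∩ (σ ∩ σ.image fun y => d' + y)).card by omega)
  obtain ⟨ha1, ha2⟩ := Finset.mem_inter.1 ha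
  obtain ⟨x, hx, hxa⟩ := Finset.mem_image.1 (Finset.mem_inter.1 ha1).2
  obtain ⟨x', hx', hx'a⟩ := Finset.mem_image.1 (Finset.mem_inter.1 ha2).2
  have he : d - d' = x' - x := by
    have : d + x = d' + x' := by rw [hxa, hx'a]
    rw [sub_eq_sub_iff_add_eq_add, this]; abel
  rw [he]
  exact Finset.sub_mem_sub hx' hx

private lemma arith_contra (n m k N w χ c2 : ℤ) (hm : 1 ≤ m) (A : m ≤ n) (B : 3*n ≤ 4*m)
    (C : 2*k+1 ≤ 3*n) (D1 : n ≤ k) (Fh : n+m ≤ N) (G : w + k = N) (H1 : 1 ≤ w) (I : w ≤ χ)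
    (J : χ + c2 = N) (K1 : 2*n*N ≤ n*n + k*N)
    (L : χ*(2*n+m) + c2*(2*n) ≤ n*n + χ*N + c2*k) : False := by
  have key : n*n + 1 ≤ (k+m)*(2*n-k) := by
    nlinarith [sq_nonneg (3*n - 2*k), sq_nonneg (n-m)]
  have hkmN : N + 1 ≤ k + m := by nlinarith
  nlinarith [mul_nonneg (by linarith : (0:ℤ) ≤ N - n - m) (by linarith : (0:ℤ) ≤ k + m - 1 - N),
             mul_nonneg (by linarith : (0:ℤ) ≤ χ - w) (by linarith : (0:ℤ) ≤ k + m - N),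
             sq_nonneg (3*n-2*k), sq_nonneg (n-m),
             mul_nonneg (by linarith : (0:ℤ) ≤ w - 1) (by linarith : (0:ℤ) ≤ k+m-N)]

private lemma key_lemma (σ τ : Finset F) (h0σ : (0:F) ∈ σ) (h0τ : (0:F) ∈ τ)
    (hle : τ.card ≤ σ.card) (h34 : 3 * σ.card ≤ 4 * τ.card)
    (h32 : 2 * (σ + τ).card < 3 * σ.card) :
    σ + τ = σ - σ := by
  have hn1 : 1 ≤ σ.card := Finset.card_pos.2 ⟨0, h0σ⟩
  have hm1 : 1 ≤ τ.card := Finset.card_pos.2 ⟨0, h0τ⟩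
  have hkn : σ.card ≤ (σ + τ).card := by
    apply Finset.card_le_card_of_injOn (fun x => x + 0)
    · intro x hx; exact Finset.add_mem_add hx h0τ
    · intro x _ x' _ h; simpa using h
  have hkm : τ.card ≤ (σ + τ).card := by
    apply Finset.card_le_card_of_injOn (fun x => 0 + x)
    · intro x hx; exact Finset.add_mem_add h0σ hx
    · intro x _ x' _ h; simpa using h
  have hsub1 : σ - σ ⊆ τ - τ := diff_subset_diff' σ τ (by omega)
  have hsub2 : τ - τ ⊆ σ - σ := by
    have : (τ + σ).card + 1 ≤ 2 * σ.card := by rw [add_comm τ σ]; omega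
    exact diff_subset_diff' τ σ this
  have hcl : ∀ d ∈ σ - σ, ∀ d' ∈ σ - σ, d - d' ∈ σ - σ :=
    sub_closed' σ τ (by omega) hsub1
  have h0D : (0:F) ∈ σ - σ := by
    have := Finset.sub_mem_sub h0σ h0σ; simpa using this
  have hσD : σ ⊆ σ - σ := by
    intro x hx; have := Finset.sub_mem_sub hx h0σ; simpa using this
  have hτD : τ ⊆ σ - σ := by
    intro x hx
    refine hsub2 ?_
    have := Finset.sub_mem_sub hx h0τ; simpa using this
  have haddcl : ∀ d ∈ σ - σ, ∀ d' ∈ σ - σ, d + d' ∈ σ - σ := by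
    intro d hd d' hd'
    have h1 : (0:F) - d' ∈ σ - σ := hcl 0 h0D d' hd'
    have h2 := hcl d hd _ h1
    have he : d - (0 - d') = d + d' := by abel
    rwa [he] at h2
  have hCD : σ + τ ⊆ σ - σ := by
    intro z hz
    obtain ⟨x, hx, v, hv, rfl⟩ := Finset.mem_add.1 hz
    exact haddcl _ (hσD hx) _ (hτD hv)
  by_contra hne
  have hex : ∃ x ∈ σ - σ, x ∉ σ + τ := by
    by_contra h
    push_neg at h
    exact hne (Finset.Subset.antisymm hCD h)
  obtain ⟨x, hxD, hxC⟩ := hex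
  have hxW : x ∈ (σ - σ) \ (σ + τ) := Finset.mem_sdiff.2 ⟨hxD, hxC⟩
  have hwk : ((σ - σ) \ (σ + τ)).card + (σ + τ).card = (σ - σ).card :=
    Finset.card_sdiff_add_card_eq_card hCD
  have hw1 : 1 ≤ ((σ - σ) \ (σ + τ)).card := Finset.card_pos.2 ⟨x, hxW⟩
  -- N ≥ n + m
  have hNnm : σ.card + τ.card ≤ (σ - σ).card := by
    have hdisj : Disjoint σ (τ.image (fun v => x - v)) := by
      rw [Finset.disjoint_right]
      intro z hz hzσ
      obtain ⟨v, hv, rfl⟩ := Finset.mem_image.1 hz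
      apply hxC
      have : (x - v) + v = x := by abel
      rw [← this]
      exact Finset.add_mem_add hzσ hv
    have hsubU : σ ∪ τ.image (fun v => x - v) ⊆ σ - σ := by
      apply Finset.union_subset hσD
      intro z hz
      obtain ⟨v, hv, rfl⟩ := Finset.mem_image.1 hz
      exact hcl x hxD v (hτD hv)
    calc σ.card + τ.card
        = σ.card + (τ.image (fun v => x - v)).card := by
          rw [Finset.card_image_of_injective _ (fun a b h => by
            simpa using sub_right_injective h)]
      _ = (σ ∪ τ.image (fun v => x - v)).card := (Finset.card_union_of_disjoint hdisj).symm
      _ ≤ (σ - σ).card := Finset.card_le_card hsubU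
  set W := (σ - σ) \ (σ + τ) with hWdef
  have hWD : W ⊆ σ - σ := Finset.sdiff_subset
  have hWWD : W - W ⊆ σ - σ := by
    intro z hz
    obtain ⟨w, hw, w', hw', rfl⟩ := Finset.mem_sub.1 hz
    exact hcl w (hWD hw) w' (hWD hw')
  have hχ : W.card ≤ (W - W).card := by
    apply Finset.card_le_card_of_injOn (fun y => y - x)
    · intro y hy; exact Finset.sub_mem_sub hy hxW
    · intro y _ y' _ h; exact sub_left_injective h
  -- popularity on W - W
  have hWWpop : ∀ d ∈ W - W,
      2 * σ.card + τ.card ≤ (σ ∩ σ.image (fun y => d + y)).card + (σ - σ).card := by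
    intro d hd
    obtain ⟨w, hw, w', hw', rfl⟩ := Finset.mem_sub.1 hd
    have hwC : w ∉ σ + τ := (Finset.mem_sdiff.1 hw).2
    have hw'C : w' ∉ σ + τ := (Finset.mem_sdiff.1 hw').2
    have hEcard : ((σ - σ) \ τ).card + τ.card = (σ - σ).card :=
      Finset.card_sdiff_add_card_eq_card hτD
    have hXwE : ∀ (ω : F), ω ∈ W → σ.image (fun u => ω - u) ⊆ (σ - σ) \ τ := by
      intro ω hω z hz
      obtain ⟨u, hu, rfl⟩ := Finset.mem_image.1 hz
      refine Finset.mem_sdiff.2 ⟨hcl ω (hWD hω) u (hσD hu), ?_⟩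
      intro hmem
      apply (Finset.mem_sdiff.1 hω).2
      have : u + (ω - u) = ω := by abel
      rw [← this]
      exact Finset.add_mem_add hu hmem
    have h1 := interCard _ _ _ (hXwE w hw) (hXwE w' hw')
    rw [Finset.card_image_of_injective _ (fun a b h => by simpa using sub_right_injective h),
      Finset.card_image_of_injective _ (fun a b h => by simpa using sub_right_injective h)] at h1
    have h2 : (σ.image (fun u => w - u) ∩ σ.image (fun u => w' - u)).card ≤
        (σ ∩ σ.image (fun y => w - w' + y)).card := by
      apply Finset.card_le_card_of_injOn (fun z => w - z)
      · intro z hz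
        obtain ⟨hz1, hz2⟩ := Finset.mem_inter.1 hz
        obtain ⟨u, hu, huz⟩ := Finset.mem_image.1 hz1
        obtain ⟨u', hu', hu'z⟩ := Finset.mem_image.1 hz2
        refine Finset.mem_inter.2 ⟨?_, ?_⟩
        · have : w - z = u := by rw [← huz]; abel
          beta_reduce; rw [this]; exact hu
        · refine Finset.mem_image.2 ⟨u', hu', ?_⟩
          beta_reduce; rw [← hu'z]; abel
      · intro z _ z' _ h
        exact sub_right_injective h
    omega
  -- global popularity
  have hpop : ∀ d ∈ σ - σ,
      2 * σ.card ≤ (σ ∩ σ.image (fun y => d + y)).card + (σ + τ).card :=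
    fun d hd => pop_bound σ τ (hsub1 hd)
  -- the sum identity
  have hsum : ∑ d ∈ σ - σ, (σ ∩ σ.image (fun y => d + y)).card = σ.card * σ.card := by
    have h1 : (σ ×ˢ σ).card =
        ∑ d ∈ σ - σ, ((σ ×ˢ σ).filter (fun p => p.1 - p.2 = d)).card :=
      Finset.card_eq_sum_card_fiberwise (fun p hp =>
        Finset.sub_mem_sub (Finset.mem_product.1 hp).1 (Finset.mem_product.1 hp).2)
    rw [Finset.card_product] at h1
    rw [h1]
    refine (Finset.sum_congr rfl ?_).symm
    intro d _
    apply Finset.card_bij (fun p _ => p.1)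
    · intro p hp
      obtain ⟨hmem, heq⟩ := Finset.mem_filter.1 hp
      refine Finset.mem_inter.2 ⟨(Finset.mem_product.1 hmem).1, ?_⟩
      refine Finset.mem_image.2 ⟨p.2, (Finset.mem_product.1 hmem).2, ?_⟩
      rw [← heq]; abel
    · intro p hp q hq h
      obtain ⟨_, heqp⟩ := Finset.mem_filter.1 hp
      obtain ⟨_, heqq⟩ := Finset.mem_filter.1 hq
      have h2 : p.2 = q.2 := by
        have e1 : p.2 = p.1 - d := by rw [← heqp]; abel
        have e2 : q.2 = q.1 - d := by rw [← heqq]; abel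
        rw [e1, e2, h]
      exact Prod.ext h h2
    · intro y hy
      obtain ⟨hy1, hy2⟩ := Finset.mem_inter.1 hy
      obtain ⟨u, hu, huy⟩ := Finset.mem_image.1 hy2
      refine ⟨(y, u), Finset.mem_filter.2 ⟨Finset.mem_product.2 ⟨hy1, hu⟩, ?_⟩, rfl⟩
      show y - u = d
      rw [← huy]
      exact add_sub_cancel_right d u
  -- sum splits and bounds
  have hsplit := Finset.sum_sdiff (f := fun d => (σ ∩ σ.image (fun y => d + y)).card) hWWD
  have hc2 : ((σ - σ) \ (W - W)).card + (W - W).card = (σ - σ).card :=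
    Finset.card_sdiff_add_card_eq_card hWWD
  have hb1 : (W - W).card * (2 * σ.card + τ.card) ≤
      (∑ d ∈ W - W, (σ ∩ σ.image (fun y => d + y)).card) + (W - W).card * (σ - σ).card := by
    have h := Finset.sum_le_sum (s := W - W)
      (f := fun _ => 2 * σ.card + τ.card)
      (g := fun d => (σ ∩ σ.image (fun y => d + y)).card + (σ - σ).card)
      (fun d hd => hWWpop d hd)
    rw [Finset.sum_const, smul_eq_mul, Finset.sum_add_distrib, Finset.sum_const,
      smul_eq_mul] at h
    exact h
  have hb2 : ((σ - σ) \ (W - W)).card * (2 * σ.card) ≤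
      (∑ d ∈ (σ - σ) \ (W - W), (σ ∩ σ.image (fun y => d + y)).card) +
        ((σ - σ) \ (W - W)).card * (σ + τ).card := by
    have h := Finset.sum_le_sum (s := (σ - σ) \ (W - W))
      (f := fun _ => 2 * σ.card)
      (g := fun d => (σ ∩ σ.image (fun y => d + y)).card + (σ + τ).card)
      (fun d hd => hpop d (Finset.mem_sdiff.1 hd).1)
    rw [Finset.sum_const, smul_eq_mul, Finset.sum_add_distrib, Finset.sum_const,
      smul_eq_mul] at h
    exact h
  have hbglob : (σ - σ).card * (2 * σ.card) ≤ σ.card * σ.card + (σ - σ).card * (σ + τ).card := by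
    have h := Finset.sum_le_sum (s := σ - σ)
      (f := fun _ => 2 * σ.card)
      (g := fun d => (σ ∩ σ.image (fun y => d + y)).card + (σ + τ).card)
      (fun d hd => hpop d hd)
    rw [Finset.sum_const, smul_eq_mul, Finset.sum_add_distrib, Finset.sum_const,
      smul_eq_mul, hsum] at h
    exact h
  have hL : (W - W).card * (2 * σ.card + τ.card) +
      ((σ - σ) \ (W - W)).card * (2 * σ.card) ≤
      σ.card * σ.card + (W - W).card * (σ - σ).card +
        ((σ - σ) \ (W - W)).card * (σ + τ).card := by
    have e : (∑ d ∈ (σ - σ) \ (W - W), (σ ∩ σ.image (fun y => d + y)).card) +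
        (∑ d ∈ W - W, (σ ∩ σ.image (fun y => d + y)).card) = σ.card * σ.card := by
      rw [hsplit, hsum]
    omega
  -- cast everything to ℤ and derive a contradiction
  have c1 : (1:ℤ) ≤ (τ.card : ℤ) := by exact_mod_cast hm1
  have c2 : ((τ.card : ℤ)) ≤ (σ.card : ℤ) := by exact_mod_cast hle
  have c3 : 3 * (σ.card : ℤ) ≤ 4 * (τ.card : ℤ) := by exact_mod_cast h34
  have c4 : 2 * ((σ + τ).card : ℤ) + 1 ≤ 3 * (σ.card : ℤ) := by exact_mod_cast h32
  have c5 : ((σ.card : ℤ)) ≤ ((σ + τ).card : ℤ) := by exact_mod_cast hkn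
  have c6 : (σ.card : ℤ) + (τ.card : ℤ) ≤ ((σ - σ).card : ℤ) := by exact_mod_cast hNnm
  have c7 : ((W.card : ℤ)) + ((σ + τ).card : ℤ) = ((σ - σ).card : ℤ) := by exact_mod_cast hwk
  have c8 : (1:ℤ) ≤ (W.card : ℤ) := by exact_mod_cast hw1
  have c9 : ((W.card : ℤ)) ≤ (((W - W).card : ℤ)) := by exact_mod_cast hχ
  have c10 : (((W - W).card : ℤ)) + ((((σ - σ) \ (W - W)).card : ℤ)) = ((σ - σ).card : ℤ) := by
    exact_mod_cast (by omega : (W - W).card + ((σ - σ) \ (W - W)).card = (σ - σ).card)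
  have c11 : ((σ - σ).card : ℤ) * (2 * (σ.card : ℤ)) ≤
      (σ.card : ℤ) * (σ.card : ℤ) + ((σ - σ).card : ℤ) * ((σ + τ).card : ℤ) := by
    exact_mod_cast hbglob
  have c12 : (((W - W).card : ℤ)) * (2 * (σ.card : ℤ) + (τ.card : ℤ)) +
      ((((σ - σ) \ (W - W)).card : ℤ)) * (2 * (σ.card : ℤ)) ≤
      (σ.card : ℤ) * (σ.card : ℤ) + (((W - W).card : ℤ)) * ((σ - σ).card : ℤ) +
        ((((σ - σ) \ (W - W)).card : ℤ)) * ((σ + τ).card : ℤ) := by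
    exact_mod_cast hL
  exact arith_contra (σ.card : ℤ) (τ.card : ℤ) ((σ + τ).card : ℤ) ((σ - σ).card : ℤ)
    (W.card : ℤ) ((W - W).card : ℤ) (((σ - σ) \ (W - W)).card : ℤ)
    c1 c2 c3 c4 c5 c6 c7 c8 c9 c10 (by linarith) (by linarith)

end KneserAux

theorem stmt_6 {F : Type*} [AddCommGroup F] (A₁ A₂ : Set F)
    (hfin₁ : A₁.Finite) (hfin₂ : A₂.Finite) (hne₁ : A₁.Nonempty) (hne₂ : A₂.Nonempty)
    (hle : A₂.ncard ≤ A₁.ncard)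
    (h34 : 3 * A₁.ncard ≤ 4 * A₂.ncard)
    (h32 : 2 * (A₁ + A₂).ncard < 3 * A₁.ncard)
    (H : AddSubgroup F)
    (hH : (H : Set F) = {x : F | {x} + (A₁ + A₂) = A₁ + A₂}) :
    (∃ a : F, A₁ + A₂ = {a} + (H : Set F)) ∧
    (∃ a : F, A₁ ⊆ {a} + (H : Set F)) ∧
    (∃ a : F, A₂ ⊆ {a} + (H : Set F)) := by
  classical
  obtain ⟨a₀, ha₀⟩ := hne₁
  obtain ⟨b₀, hb₀⟩ := hne₂
  set s : Finset F := hfin₁.toFinset with hsdef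
  set t : Finset F := hfin₂.toFinset with htdef
  have hs : (s : Set F) = A₁ := hfin₁.coe_toFinset
  have ht : (t : Set F) = A₂ := hfin₂.coe_toFinset
  have ha₀s : a₀ ∈ s := hfin₁.mem_toFinset.2 ha₀
  have hb₀t : b₀ ∈ t := hfin₂.mem_toFinset.2 hb₀
  set σ : Finset F := s.image (fun x => x - a₀) with hσdef
  set τ : Finset F := t.image (fun v => v - b₀) with hτdef
  have h0σ : (0:F) ∈ σ := Finset.mem_image.2 ⟨a₀, ha₀s, sub_self a₀⟩
  have h0τ : (0:F) ∈ τ := Finset.mem_image.2 ⟨b₀, hb₀t, sub_self b₀⟩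
  have hσcard : σ.card = s.card :=
    Finset.card_image_of_injective _ (fun a b h => by simpa using sub_left_injective h)
  have hτcard : τ.card = t.card :=
    Finset.card_image_of_injective _ (fun a b h => by simpa using sub_left_injective h)
  -- s + t is a translate of σ + τ
  have hstq : s + t = (σ + τ).image (fun z => (a₀ + b₀) + z) := by
    ext z
    constructor
    · intro hz
      obtain ⟨u, hu, v, hv, rfl⟩ := Finset.mem_add.1 hz
      refine Finset.mem_image.2 ⟨(u - a₀) + (v - b₀), ?_, by abel⟩
      exact Finset.add_mem_add (Finset.mem_image.2 ⟨u, hu, rfl⟩)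
        (Finset.mem_image.2 ⟨v, hv, rfl⟩)
    · intro hz
      obtain ⟨p, hp, rfl⟩ := Finset.mem_image.1 hz
      obtain ⟨xx, hxx, yy, hyy, rfl⟩ := Finset.mem_add.1 hp
      obtain ⟨u, hu, rfl⟩ := Finset.mem_image.1 hxx
      obtain ⟨v, hv, rfl⟩ := Finset.mem_image.1 hyy
      have : a₀ + b₀ + (u - a₀ + (v - b₀)) = u + v := by abel
      rw [this]
      exact Finset.add_mem_add hu hv
  have hstcard : (σ + τ).card = (s + t).card := by
    rw [hstq, Finset.card_image_of_injective _ (add_right_injective _)]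
  -- translate ncard hypotheses
  have hn : A₁.ncard = s.card := by rw [← hs, Set.ncard_coe_finset]
  have hm : A₂.ncard = t.card := by rw [← ht, Set.ncard_coe_finset]
  have hAA : A₁ + A₂ = ((s + t : Finset F) : Set F) := by
    rw [Finset.coe_add, hs, ht]
  have hk : (A₁ + A₂).ncard = (s + t).card := by rw [hAA, Set.ncard_coe_finset]
  -- apply the key lemma
  have hkey : σ + τ = σ - σ := by
    apply key_lemma σ τ h0σ h0τ
    · rw [hσcard, hτcard, ← hn, ← hm]; exact hle
    · rw [hσcard, hτcard, ← hn, ← hm]; exact h34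
    · rw [hσcard, hstcard, ← hn, ← hk]; exact h32
  -- closure facts for D := σ - σ
  have hn1 : 1 ≤ σ.card := Finset.card_pos.2 ⟨0, h0σ⟩
  have hm1 : 1 ≤ τ.card := Finset.card_pos.2 ⟨0, h0τ⟩
  have hle' : τ.card ≤ σ.card := by rw [hσcard, hτcard, ← hn, ← hm]; exact hle
  have h34' : 3 * σ.card ≤ 4 * τ.card := by rw [hσcard, hτcard, ← hn, ← hm]; exact h34
  have h32' : 2 * (σ + τ).card < 3 * σ.card := by
    rw [hσcard, hstcard, ← hn, ← hk]; exact h32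
  have hkn : σ.card ≤ (σ + τ).card := by
    apply Finset.card_le_card_of_injOn (fun x => x + 0)
    · intro x hx; exact Finset.add_mem_add hx h0τ
    · intro x _ x' _ h; simpa using h
  have hsub1 : σ - σ ⊆ τ - τ := diff_subset_diff' σ τ (by omega)
  have hsub2 : τ - τ ⊆ σ - σ := by
    have hkm : τ.card ≤ (σ + τ).card := by
      apply Finset.card_le_card_of_injOn (fun x => 0 + x)
      · intro x hx; exact Finset.add_mem_add h0σ hx
      · intro x _ x' _ h; simpa using h
    have : (τ + σ).card + 1 ≤ 2 * σ.card := by rw [add_comm τ σ]; omega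
    exact diff_subset_diff' τ σ this
  have hcl : ∀ d ∈ σ - σ, ∀ d' ∈ σ - σ, d - d' ∈ σ - σ :=
    sub_closed' σ τ (by omega) hsub1
  have h0D : (0:F) ∈ σ - σ := by
    have := Finset.sub_mem_sub h0σ h0σ; simpa using this
  have hσD : σ ⊆ σ - σ := by
    intro x hx; have := Finset.sub_mem_sub hx h0σ; simpa using this
  have hτD : τ ⊆ σ - σ := by
    intro x hx
    refine hsub2 ?_
    have := Finset.sub_mem_sub hx h0τ; simpa using this
  have haddcl : ∀ d ∈ σ - σ, ∀ d' ∈ σ - σ, d + d' ∈ σ - σ := by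
    intro d hd d' hd'
    have h1 : (0:F) - d' ∈ σ - σ := hcl 0 h0D d' hd'
    have h2 := hcl d hd _ h1
    have he : d - (0 - d') = d + d' := by abel
    rwa [he] at h2
  -- the coset description of A₁ + A₂
  have hCset : A₁ + A₂ = {a₀ + b₀} + ((σ - σ : Finset F) : Set F) := by
    rw [hAA, hstq, hkey]
    ext z
    simp only [Finset.coe_image, Set.mem_image, Finset.mem_coe, Set.mem_add,
      Set.mem_singleton_iff]
    constructor
    · rintro ⟨d, hd, rfl⟩
      exact ⟨a₀ + b₀, rfl, d, hd, rfl⟩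
    · rintro ⟨c, rfl, d, hd, rfl⟩
      exact ⟨d, hd, rfl⟩
  -- identify H with D
  have hHD : (H : Set F) = ((σ - σ : Finset F) : Set F) := by
    rw [hH]
    ext y
    simp only [Set.mem_setOf_eq, Finset.mem_coe]
    constructor
    · intro hy
      rw [hCset] at hy
      have hc₀ : (a₀ + b₀) + 0 ∈ {a₀ + b₀} + ((σ - σ : Finset F) : Set F) :=
        Set.add_mem_add rfl h0D
      have h1 : y + ((a₀ + b₀) + 0) ∈ {y} + ({a₀ + b₀} + ((σ - σ : Finset F) : Set F)) :=
        Set.add_mem_add rfl hc₀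
      rw [hy] at h1
      obtain ⟨c, hc, d, hd, hcd⟩ := Set.mem_add.1 h1
      rw [Set.mem_singleton_iff] at hc
      subst hc
      have hyd : y = d := by
        have h2 : d + (a₀ + b₀) = y + (a₀ + b₀) := by
          rw [add_comm d (a₀ + b₀), hcd, add_zero]
        exact (add_right_cancel h2).symm
      exact hyd ▸ Finset.mem_coe.1 hd
    · intro hy
      rw [hCset]
      ext z
      simp only [Set.mem_add, Set.mem_singleton_iff, Finset.mem_coe]
      constructor
      · rintro ⟨yy, hyy, w, ⟨c, hc, d, hd, hcd⟩, hz⟩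
        rw [hyy] at hz
        rw [hc] at hcd
        refine ⟨a₀ + b₀, rfl, y + d, haddcl y hy d hd, ?_⟩
        rw [← hz, ← hcd]; abel
      · rintro ⟨c, hc, d, hd, hcd⟩
        refine ⟨y, rfl, (a₀ + b₀) + (d - y), ⟨a₀ + b₀, rfl, d - y, hcl d hd y hy, rfl⟩, ?_⟩
        rw [← hcd, hc]; abel
  refine ⟨⟨a₀ + b₀, by rw [hCset, hHD]⟩, ⟨a₀, ?_⟩, ⟨b₀, ?_⟩⟩
  · intro u hu
    have hus : u ∈ s := hfin₁.mem_toFinset.2 hu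
    have huσ : u - a₀ ∈ σ := Finset.mem_image.2 ⟨u, hus, rfl⟩
    refine Set.mem_add.2 ⟨a₀, rfl, u - a₀, ?_, by abel⟩
    rw [hHD]
    exact hσD huσ
  · intro u hu
    have hut : u ∈ t := hfin₂.mem_toFinset.2 hu
    have huτ : u - b₀ ∈ τ := Finset.mem_image.2 ⟨u, hut, rfl⟩
    refine Set.mem_add.2 ⟨b₀, rfl, u - b₀, ?_, by abel⟩
    rw [hHD]
    exact hτD huτ
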